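/- Let H be a Hilbert space, a an isometry on H, R = (range a)^⊥, and K = ⋂_{n≥0} range(a^n). Then K^⊥ equals the closure of the orthogonal direct sum ⊕_{n≥0} a^n(R); equivalently, a vector ξ lies in K if and only if ξ is orthogonal to a^n(θ) for every θ ∈ R and every n ≥ 0. -/

import Mathlib

/-- Wold decomposition, part (iii), second half: for an isometry `a` on a Hilbert space `H`,
with `R = (range a)ᗮ` and `K = ⋂ₙ range (aⁿ)`, the complement `Kᗮ` is the closure of the
(orthogonal) direct sum `⊕ₙ aⁿ(R)`; equivalently, `ξ ∈ K` iff `ξ ⟂ aⁿ(θ)` for every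
`θ ∈ R` and every `n ≥ 0`. -/
theorem wold_complement_eq_shift_part {H : Type*} [NormedAddCommGroup H]
    [InnerProductSpace ℂ H] [CompleteSpace H] (a : H →L[ℂ] H)
    (ha : ∀ ξ : H, ‖a ξ‖ = ‖ξ‖) :
    (⨅ n : ℕ, LinearMap.range ((a ^ n : H →L[ℂ] H) : H →ₗ[ℂ] H))ᗮ =
      (⨆ n : ℕ, Submodule.map ((a ^ n : H →L[ℂ] H) : H →ₗ[ℂ] H) (LinearMap.range (a : H →ₗ[ℂ] H))ᗮ).topologicalClosure ∧
    (∀ ξ : H, ξ ∈ (⨅ n : ℕ, LinearMap.range ((a ^ n : H →L[ℂ] H) : H →ₗ[ℂ] H)) ↔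
      ∀ θ ∈ (LinearMap.range (a : H →ₗ[ℂ] H))ᗮ, ∀ n : ℕ, (inner ℂ ξ ((a ^ n) θ) : ℂ) = 0) := by
  have hpow : ∀ (n : ℕ) (ξ : H), ‖(a ^ n) ξ‖ = ‖ξ‖ := by
    intro n
    induction n with
    | zero => intro ξ; simp
    | succ n ih =>
      intro ξ
      rw [pow_succ, ContinuousLinearMap.mul_apply, ih, ha]
  -- linear isometries
  set li : ∀ n : ℕ, H →ₗᵢ[ℂ] H := fun n => ⟨(a ^ n).toLinearMap, hpow n⟩ with hli
  have hinner : ∀ (n : ℕ) (x y : H), (inner ℂ ((a ^ n) x) ((a ^ n) y) : ℂ) = inner ℂ x y := by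
    intro n x y
    exact (li n).inner_map_map x y
  have hclosed : ∀ n : ℕ, IsClosed ((LinearMap.range ((a ^ n : H →L[ℂ] H) : H →ₗ[ℂ] H) : Submodule ℂ H) : Set H) := by
    intro n
    have : IsClosed (Set.range (a ^ n)) :=
      ((AddMonoidHomClass.isometry_of_norm (a ^ n) (hpow n)).isClosedEmbedding).isClosed_range
    rw [LinearMap.coe_range]; exact this
  haveI : CompleteSpace (LinearMap.range (a : H →ₗ[ℂ] H)) := by
    have := hclosed 1
    simp only [pow_one] at this
    exact this.completeSpace_coe
  have hRorth : ∀ θ ∈ (LinearMap.range (a : H →ₗ[ℂ] H))ᗮ, ∀ η : H, (inner ℂ (a η) θ : ℂ) = 0 := by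
    intro θ hθ η
    exact hθ (a η) ⟨η, rfl⟩
  -- forward direction
  have fwd : ∀ ξ : H, ξ ∈ (⨅ n : ℕ, LinearMap.range ((a ^ n : H →L[ℂ] H) : H →ₗ[ℂ] H)) →
      ∀ θ ∈ (LinearMap.range (a : H →ₗ[ℂ] H))ᗮ, ∀ n : ℕ, (inner ℂ ξ ((a ^ n) θ) : ℂ) = 0 := by
    intro ξ hξ θ hθ n
    have : ξ ∈ LinearMap.range ((a ^ (n + 1) : H →L[ℂ] H) : H →ₗ[ℂ] H) := Submodule.mem_iInf _ |>.mp hξ (n + 1)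
    obtain ⟨η, rfl⟩ := this
    have h1 : (a ^ (n + 1)) η = (a ^ n) (a η) := by
      rw [pow_succ, ContinuousLinearMap.mul_apply]
    rw [ContinuousLinearMap.coe_coe, h1, hinner]
    exact hRorth θ hθ η
  -- backward direction
  have bwd : ∀ ξ : H, (∀ θ ∈ (LinearMap.range (a : H →ₗ[ℂ] H))ᗮ, ∀ n : ℕ, (inner ℂ ξ ((a ^ n) θ) : ℂ) = 0) →
      ξ ∈ (⨅ n : ℕ, LinearMap.range ((a ^ n : H →L[ℂ] H) : H →ₗ[ℂ] H)) := by
    intro ξ hξ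
    rw [Submodule.mem_iInf]
    intro n
    induction n with
    | zero => simp
    | succ n ih =>
      obtain ⟨η, rfl⟩ := ih
      obtain ⟨y, hy, z, hz, hyz⟩ :=
        Submodule.exists_add_mem_mem_orthogonal (K := LinearMap.range (a : H →ₗ[ℂ] H)) η
      obtain ⟨ζ, rfl⟩ := hy
      have hξz : (inner ℂ ((a ^ n) η) ((a ^ n) z) : ℂ) = 0 := hξ z hz n
      have hsplit : (a ^ n) η = (a ^ (n + 1)) ζ + (a ^ n) z := by
        rw [hyz, map_add, pow_succ, ContinuousLinearMap.mul_apply, ContinuousLinearMap.coe_coe]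
      have hz0 : z = 0 := by
        have h2 : (inner ℂ ((a ^ n) η) ((a ^ n) z) : ℂ) = inner ℂ η z := hinner n η z
        have h5 : (0:ℂ) = inner ℂ η z := by rw [← hξz, hinner]
        rw [hyz, inner_add_left, ContinuousLinearMap.coe_coe, hRorth z hz ζ, zero_add] at h5
        have : (inner ℂ z z : ℂ) = 0 := h5.symm
        exact inner_self_eq_zero.mp this
      refine ⟨ζ, ?_⟩
      simp only [ContinuousLinearMap.coe_coe]
      rw [hsplit, hz0, map_zero, add_zero]
  constructor
  · have hK : (⨅ n : ℕ, LinearMap.range ((a ^ n : H →L[ℂ] H) : H →ₗ[ℂ] H)) =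
        (⨆ n : ℕ, Submodule.map ((a ^ n : H →L[ℂ] H) : H →ₗ[ℂ] H) (LinearMap.range (a : H →ₗ[ℂ] H))ᗮ)ᗮ := by
      rw [← Submodule.iInf_orthogonal]
      ext ξ
      rw [Submodule.mem_iInf, Submodule.mem_iInf]
      constructor
      · intro h n
        rw [Submodule.mem_orthogonal]
        rintro u ⟨θ, hθ, rfl⟩
        have := fwd ξ (Submodule.mem_iInf _ |>.mpr h) θ hθ n
        rw [inner_eq_zero_symm]; exact this
      · intro h
        have : ξ ∈ (⨅ n : ℕ, LinearMap.range ((a ^ n : H →L[ℂ] H) : H →ₗ[ℂ] H)) := by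
          apply bwd
          intro θ hθ n
          have := (Submodule.mem_orthogonal _ _).mp (h n) ((a ^ n) θ)
            ⟨θ, hθ, rfl⟩
          rw [inner_eq_zero_symm]; exact this
        exact Submodule.mem_iInf _ |>.mp this
    rw [hK, Submodule.orthogonal_orthogonal_eq_closure]
  · intro ξ
    exact ⟨fwd ξ, bwd ξ⟩
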